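/- Let $A, B, X \in \mathbb{M}_n$ be such that the block matrix $M = \begin{bmatrix} A & X \\ X^* & B \end{bmatrix} \in \mathbb{M}_{2n}$ is positive semi-definite. Then for every symmetric norm $\|\cdot\|$ on $\mathbb{M}_{4n}$ one has $\| M \oplus M \| \le 2 \| A \oplus B \|$, where $S \oplus T$ denotes the block-diagonal matrix $\begin{bmatrix} S & 0 \\ 0 & T \end{bmatrix}$ and $A \oplus B \in \mathbb{M}_{2n}$ is embedded as the upper-left block of a matrix in $\mathbb{M}_{4n}$. -/

import Mathlib

open Matrix
open scoped ComplexOrder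

/-- The absolute value `|Z| = (Zᴴ Z)^(1/2)` of a square complex matrix. -/
noncomputable def matAbs {m : Type*} [Fintype m] [DecidableEq m]
    (Z : Matrix m m ℂ) : Matrix m m ℂ :=
  (Matrix.posSemidef_conjTranspose_mul_self Z).1.eigenvectorUnitary.1 *
    Matrix.diagonal ((↑) ∘ (√·) ∘ (Matrix.posSemidef_conjTranspose_mul_self Z).1.eigenvalues) *
    (star (Matrix.posSemidef_conjTranspose_mul_self Z).1.eigenvectorUnitary : Matrix m m ℂ)

/-- Functional calculus: apply `f : ℝ → ℝ` to the eigenvalues of a Hermitian matrix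
(junk value `0` if the matrix is not Hermitian). -/
noncomputable def hermApply {m : Type*} [Fintype m] [DecidableEq m]
    (f : ℝ → ℝ) (S : Matrix m m ℂ) : Matrix m m ℂ :=
  if hS : S.IsHermitian then
    (hS.eigenvectorUnitary : Matrix m m ℂ) *
      Matrix.diagonal (fun i => (f (hS.eigenvalues i) : ℂ)) *
      (star (hS.eigenvectorUnitary : Matrix m m ℂ))
  else 0

/-- Real power of a positive semi-definite matrix by functional calculus. -/
noncomputable def matPow {m : Type*} [Fintype m] [DecidableEq m]
    (S : Matrix m m ℂ) (p : ℝ) : Matrix m m ℂ :=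
  hermApply (fun x => x ^ p) S

/-- A symmetric (unitarily invariant) norm on complex `m × m` matrices. -/
structure IsSymmetricNorm {m : Type*} [Fintype m] [DecidableEq m]
    (N : Matrix m m ℂ → ℝ) : Prop where
  add_le : ∀ A B, N (A + B) ≤ N A + N B
  smul : ∀ (c : ℂ) (A), N (c • A) = ‖c‖ * N A
  eq_zero_of : ∀ A, N A = 0 → A = 0
  unitary_mul_left : ∀ (U : Matrix.unitaryGroup m ℂ) (A), N (U * A) = N A
  mul_unitary_right : ∀ (U : Matrix.unitaryGroup m ℂ) (A), N (A * U) = N A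

/-- Eigenvalues of a Hermitian matrix (junk value `0` if not Hermitian). -/
noncomputable def eigVals {m : Type*} [Fintype m] [DecidableEq m]
    (Z : Matrix m m ℂ) : m → ℝ :=
  if hZ : Z.IsHermitian then hZ.eigenvalues else 0

/-- Eigenvalues of a Hermitian `n × n` matrix listed in decreasing order. -/
noncomputable def eigDown {n : ℕ} (Z : Matrix (Fin n) (Fin n) ℂ) : Fin n → ℝ :=
  fun i => (eigVals Z ∘ Tuple.sort (eigVals Z)) i.rev

/-- `Z ^ ↓`: the diagonal matrix listing the eigenvalues of `Z` in decreasing order. -/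
noncomputable def downMat {n : ℕ} (Z : Matrix (Fin n) (Fin n) ℂ) : Matrix (Fin n) (Fin n) ℂ :=
  Matrix.diagonal (fun i => (eigDown Z i : ℂ))

/-- Schatten `p`-norm. -/
noncomputable def schattenNorm {m : Type*} [Fintype m] [DecidableEq m]
    (p : ℝ) (Z : Matrix m m ℂ) : ℝ :=
  (∑ i, eigVals (matAbs Z) i ^ p) ^ (1 / p)

/-- Operator norm (largest singular value). -/
noncomputable def opNormInf {m : Type*} [Fintype m] [DecidableEq m]
    (Z : Matrix m m ℂ) : ℝ :=
  ⨆ i, Real.sqrt (eigVals (Zᴴ * Z) i)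

/-- Numerical range. -/
def numRange {m : Type*} [Fintype m] (X : Matrix m m ℂ) : Set ℂ :=
  {z | ∃ x : m → ℂ, ∑ i, ‖x i‖ ^ 2 = 1 ∧ dotProduct (star x) (X *ᵥ x) = z}

/-- Numerical radius. -/
noncomputable def numRadius {m : Type*} [Fintype m] (X : Matrix m m ℂ) : ℝ :=
  sSup ((fun z : ℂ => ‖z‖) '' numRange X)

section Aux

open Polynomial

set_option linter.unusedSectionVars false
set_option linter.unnecessarySeqFocus false
set_option linter.unusedTactic false


variable {m : Type*} [Fintype m] [DecidableEq m]

lemma charpoly_conj_of_mul_eq_one {P Q M : Matrix m m ℂ} (h : P * Q = 1) :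
    (P * M * Q).charpoly = M.charpoly := by
  have hc : ∀ Z : Matrix m m ℂ, charmatrix Z =
      Matrix.diagonal (fun _ : m => (X : ℂ[X])) - Z.map (C : ℂ →+* ℂ[X]) := by
    intro Z; ext i j; rw [charmatrix_apply]; simp [Matrix.map_apply]
  have hmap : ∀ (Y Z : Matrix m m ℂ), (Y * Z).map (C : ℂ →+* ℂ[X]) =
      Y.map (C : ℂ →+* ℂ[X]) * Z.map (C : ℂ →+* ℂ[X]) := fun Y Z => Matrix.map_mul
  have h1 : (P.map (C : ℂ →+* ℂ[X])) * (Q.map (C : ℂ →+* ℂ[X])) = 1 := by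
    rw [← hmap, h]; simp
  have hdiag : ∀ Y : Matrix m m ℂ[X],
      Matrix.diagonal (fun _ : m => (X : ℂ[X])) * Y = Y * Matrix.diagonal (fun _ : m => (X : ℂ[X])) := by
    intro Y
    rw [← Matrix.smul_one_eq_diagonal]
    simp [Matrix.smul_mul, Matrix.mul_smul]
  have key : charmatrix (P * M * Q) =
      (P.map (C : ℂ →+* ℂ[X])) * charmatrix M * (Q.map (C : ℂ →+* ℂ[X])) := by
    rw [hc, hc, Matrix.mul_sub, Matrix.sub_mul, hmap, hmap]
    congr 1
    rw [← hdiag, Matrix.mul_assoc, h1, Matrix.mul_one]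
  rw [Matrix.charpoly, key, Matrix.det_mul, Matrix.det_mul, Matrix.charpoly]
  have : (P.map (C : ℂ →+* ℂ[X])).det * (Q.map (C : ℂ →+* ℂ[X])).det = 1 := by
    rw [← Matrix.det_mul, h1, Matrix.det_one]
  ring_nf
  ring_nf at this
  calc (P.map (C : ℂ →+* ℂ[X])).det * (charmatrix M).det * (Q.map (C : ℂ →+* ℂ[X])).det
      = (charmatrix M).det * ((P.map (C : ℂ →+* ℂ[X])).det * (Q.map (C : ℂ →+* ℂ[X])).det) := by ring
    _ = (charmatrix M).det := by rw [this, mul_one]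

lemma charpoly_zero_eq : (0 : Matrix m m ℂ).charpoly = X ^ (Fintype.card m) := by
  have : charmatrix (0 : Matrix m m ℂ) = Matrix.diagonal (fun _ : m => (X : ℂ[X])) := by
    ext i j
    rcases eq_or_ne i j with rfl | hij
    · simp [charmatrix_apply_eq]
    · simp [charmatrix_apply_ne _ _ _ hij, Matrix.diagonal_apply_ne _ hij]
  rw [Matrix.charpoly, this, Matrix.det_diagonal]
  simp [Finset.prod_const, Finset.card_univ]

lemma charpoly_mul_comm' (A B : Matrix m m ℂ) : (A * B).charpoly = (B * A).charpoly := by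
  set G1 : Matrix (m ⊕ m) (m ⊕ m) ℂ := Matrix.fromBlocks 1 (-A) 0 1 with hG1
  set G2 : Matrix (m ⊕ m) (m ⊕ m) ℂ := Matrix.fromBlocks 1 A 0 1 with hG2
  set T : Matrix (m ⊕ m) (m ⊕ m) ℂ := Matrix.fromBlocks (A * B) 0 B 0 with hT
  have key : G1 * T * G2 = Matrix.fromBlocks 0 0 B (B * A) := by
    rw [hG1, hG2, hT]
    simp [Matrix.fromBlocks_multiply, Matrix.mul_assoc]
  have hunit : G1 * G2 = 1 := by
    rw [hG1, hG2]
    rw [Matrix.fromBlocks_multiply, ← Matrix.fromBlocks_one]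
    congr 1 <;> simp
  have h1 := charpoly_conj_of_mul_eq_one (M := T) hunit
  rw [key, hT] at h1
  rw [Matrix.charpoly_fromBlocks_zero₁₂, Matrix.charpoly_fromBlocks_zero₁₂] at h1
  rw [charpoly_zero_eq] at h1
  have hX : (X : ℂ[X]) ^ (Fintype.card m) ≠ 0 := pow_ne_zero _ X_ne_zero
  rw [mul_comm ((X:ℂ[X]) ^ Fintype.card m)] at h1
  exact (mul_right_cancel₀ hX h1).symm

lemma charpoly_diagonal_eq (d : m → ℂ) :
    (Matrix.diagonal d).charpoly = ∏ i, (X - C (d i)) := by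
  have : charmatrix (Matrix.diagonal d) = Matrix.diagonal (fun i => (X : ℂ[X]) - C (d i)) := by
    ext i j
    rcases eq_or_ne i j with rfl | hij
    · simp [charmatrix_apply_eq]
    · simp [charmatrix_apply_ne _ _ _ hij, Matrix.diagonal_apply_ne _ hij]
  rw [Matrix.charpoly, this, Matrix.det_diagonal]

lemma roots_charpoly_isHermitian {S : Matrix m m ℂ} (hS : S.IsHermitian) :
    S.charpoly.roots = Finset.univ.val.map (fun i => ((hS.eigenvalues i : ℝ) : ℂ)) := by
  have hU : ((hS.eigenvectorUnitary : Matrix m m ℂ)) * (star (hS.eigenvectorUnitary : Matrix m m ℂ)) = 1 :=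
    Matrix.mem_unitaryGroup_iff.mp hS.eigenvectorUnitary.2
  have h1 : S.charpoly = (Matrix.diagonal (RCLike.ofReal ∘ hS.eigenvalues) : Matrix m m ℂ).charpoly := by
    conv_lhs => rw [hS.spectral_theorem]
    exact charpoly_conj_of_mul_eq_one hU
  rw [h1, charpoly_diagonal_eq]
  rw [← Polynomial.roots_multiset_prod_X_sub_C (Finset.univ.val.map (fun i => ((hS.eigenvalues i : ℝ) : ℂ)))]
  congr 1
  rw [Multiset.map_map]
  rfl

lemma exists_perm_comp_eq {a b : m → ℝ}
    (h : Finset.univ.val.map a = Finset.univ.val.map b) :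
    ∃ σ : Equiv.Perm m, a ∘ σ = b := by
  -- reduce to Fin k
  obtain ⟨k, ⟨e⟩⟩ : ∃ k, Nonempty (m ≃ Fin k) := ⟨Fintype.card m, ⟨Fintype.equivFin m⟩⟩
  have huniv : ∀ f : m → ℝ, Finset.univ.val.map f =
      Finset.univ.val.map (f ∘ e.symm) := by
    intro f
    have : (Finset.univ : Finset (Fin k)).val.map (⇑e.symm) = (Finset.univ : Finset m).val := by
      have h2 := congrArg Finset.val (Finset.map_univ_equiv e.symm)
      rw [Finset.map_val] at h2
      exact h2
    rw [← this, Multiset.map_map]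
  rw [huniv a, huniv b] at h
  set a' := a ∘ e.symm with ha'
  set b' := b ∘ e.symm with hb'
  -- sorted versions
  have hperm : ∀ (f : Fin k → ℝ) (σ : Equiv.Perm (Fin k)),
      Finset.univ.val.map (f ∘ σ) = Finset.univ.val.map f := by
    intro f σ
    have : (Finset.univ : Finset (Fin k)).val.map (⇑σ) = (Finset.univ : Finset (Fin k)).val := by
      have h2 := congrArg Finset.val (Finset.map_univ_equiv σ)
      rw [Finset.map_val] at h2
      exact h2
    rw [← Multiset.map_map, this]
  have hsorted : a' ∘ Tuple.sort a' = b' ∘ Tuple.sort b' := by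
    have hmults : Finset.univ.val.map (a' ∘ Tuple.sort a') =
        Finset.univ.val.map (b' ∘ Tuple.sort b') := by
      rw [hperm, hperm, h]
    have hl : ∀ f : Fin k → ℝ, Finset.univ.val.map f = ↑(List.ofFn f) := by
      intro f
      rw [List.ofFn_eq_map]
      rfl
    rw [hl, hl] at hmults
    have hp : (List.ofFn (a' ∘ Tuple.sort a')).Perm (List.ofFn (b' ∘ Tuple.sort b')) :=
      Multiset.coe_eq_coe.mp hmults
    have heq := List.Perm.eq_of_sortedLE
      ((Tuple.monotone_sort a').sortedLE_ofFn) ((Tuple.monotone_sort b').sortedLE_ofFn) hp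
    exact List.ofFn_injective heq
  refine ⟨e.trans (((Tuple.sort b').symm.trans (Tuple.sort a')).trans e.symm), ?_⟩
  funext x
  have : a' (Tuple.sort a' ((Tuple.sort b').symm (e x))) = b' (Tuple.sort b' ((Tuple.sort b').symm (e x))) :=
    congrFun hsorted _
  simpa [a', b'] using this

lemma conj_diag_perm (V : Matrix m m ℂ) (d : m → ℂ) (σ : Equiv.Perm m) :
    V * Matrix.diagonal (d ∘ σ) * Vᴴ =
      (V.submatrix id ⇑σ.symm) * Matrix.diagonal d * (V.submatrix id ⇑σ.symm)ᴴ := by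
  ext i j
  rw [Matrix.mul_apply, Matrix.mul_apply]
  simp only [Matrix.mul_diagonal, Matrix.conjTranspose_apply, Matrix.submatrix_apply,
    id_eq, Function.comp_apply]
  exact Fintype.sum_equiv σ _ _ (fun k => by simp)

lemma submatrix_unitary {V : Matrix m m ℂ} (hV : V ∈ Matrix.unitaryGroup m ℂ)
    (σ : Equiv.Perm m) : V.submatrix id ⇑σ.symm ∈ Matrix.unitaryGroup m ℂ := by
  rw [Matrix.mem_unitaryGroup_iff, Matrix.star_eq_conjTranspose, Matrix.conjTranspose_submatrix]
  rw [Matrix.submatrix_mul_equiv V Vᴴ id σ.symm id]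
  rw [Matrix.mem_unitaryGroup_iff, Matrix.star_eq_conjTranspose] at hV
  rw [hV]
  rfl

lemma exists_unitary_conj_of_charpoly_eq {S T : Matrix m m ℂ}
    (hS : S.IsHermitian) (hT : T.IsHermitian) (h : S.charpoly = T.charpoly) :
    ∃ U ∈ Matrix.unitaryGroup m ℂ, T = U * S * Uᴴ := by
  have hroots : Finset.univ.val.map (fun i => ((hS.eigenvalues i : ℝ) : ℂ)) =
      Finset.univ.val.map (fun i => ((hT.eigenvalues i : ℝ) : ℂ)) := by
    rw [← roots_charpoly_isHermitian hS, ← roots_charpoly_isHermitian hT, h]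
  have hreal : Finset.univ.val.map hS.eigenvalues = Finset.univ.val.map hT.eigenvalues := by
    have := congrArg (Multiset.map Complex.re) hroots
    rwa [Multiset.map_map, Multiset.map_map] at this
  obtain ⟨σ, hσ⟩ := exists_perm_comp_eq hreal
  have hdT : Matrix.diagonal (RCLike.ofReal ∘ hT.eigenvalues : m → ℂ) =
      Matrix.diagonal (((RCLike.ofReal ∘ hS.eigenvalues : m → ℂ)) ∘ σ) := by
    rw [← hσ]
    rfl
  have hWu : (hT.eigenvectorUnitary : Matrix m m ℂ).submatrix id ⇑σ.symm ∈
      Matrix.unitaryGroup m ℂ := submatrix_unitary hT.eigenvectorUnitary.2 σ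
  have hTW : T = ((hT.eigenvectorUnitary : Matrix m m ℂ).submatrix id ⇑σ.symm) *
      Matrix.diagonal (RCLike.ofReal ∘ hS.eigenvalues : m → ℂ) *
      ((hT.eigenvectorUnitary : Matrix m m ℂ).submatrix id ⇑σ.symm)ᴴ := by
    conv_lhs => rw [hT.spectral_theorem]
    rw [Unitary.conjStarAlgAut_apply, hdT, Matrix.star_eq_conjTranspose]
    exact conj_diag_perm _ _ σ
  have hdS : Matrix.diagonal (RCLike.ofReal ∘ hS.eigenvalues : m → ℂ) =
      (hS.eigenvectorUnitary : Matrix m m ℂ)ᴴ * S * (hS.eigenvectorUnitary : Matrix m m ℂ) := by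
    rw [← Matrix.star_eq_conjTranspose]
    rw [← hS.conjStarAlgAut_star_eigenvectorUnitary, Unitary.conjStarAlgAut_apply, Unitary.coe_star,
      star_star]
  set W : Matrix m m ℂ := (hT.eigenvectorUnitary : Matrix m m ℂ).submatrix id ⇑σ.symm
  set VS : Matrix m m ℂ := (hS.eigenvectorUnitary : Matrix m m ℂ) with hVS
  have hVSu : VSᴴ * VS = 1 := by
    have := Matrix.mem_unitaryGroup_iff'.mp hS.eigenvectorUnitary.2
    rwa [Matrix.star_eq_conjTranspose] at this
  have hWWu : W * Wᴴ = 1 := by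
    have := Matrix.mem_unitaryGroup_iff.mp hWu
    rwa [Matrix.star_eq_conjTranspose] at this
  refine ⟨W * VSᴴ, ?_, ?_⟩
  · rw [Matrix.mem_unitaryGroup_iff, Matrix.star_eq_conjTranspose, Matrix.conjTranspose_mul,
      Matrix.conjTranspose_conjTranspose]
    calc W * VSᴴ * (VS * Wᴴ) = W * (VSᴴ * VS) * Wᴴ := by
          rw [Matrix.mul_assoc, Matrix.mul_assoc, Matrix.mul_assoc]
      _ = W * Wᴴ := by rw [hVSu, Matrix.mul_one]
      _ = 1 := hWWu
  · rw [hTW, hdS, Matrix.conjTranspose_mul, Matrix.conjTranspose_conjTranspose]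
    simp only [Matrix.mul_assoc]


lemma IsSymmetricNorm.conj_unitary {N : Matrix m m ℂ → ℝ} (hN : IsSymmetricNorm N)
    {U : Matrix m m ℂ} (hU : U ∈ Matrix.unitaryGroup m ℂ) (A : Matrix m m ℂ) :
    N (U * A * Uᴴ) = N A := by
  have h1 := hN.unitary_mul_left ⟨U, hU⟩ (A * Uᴴ)
  have h2 : N (A * Uᴴ) = N A := by
    simpa [Matrix.star_eq_conjTranspose] using hN.mul_unitary_right ⟨star U, Unitary.star_mem hU⟩ A
  calc N (U * A * Uᴴ) = N (U * (A * Uᴴ)) := by rw [Matrix.mul_assoc]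
    _ = N (A * Uᴴ) := h1
    _ = N A := h2

lemma IsSymmetricNorm.mul_conjTranspose_self {N : Matrix m m ℂ → ℝ} (hN : IsSymmetricNorm N)
    (Z : Matrix m m ℂ) : N (Z * Zᴴ) = N (Zᴴ * Z) := by
  have hS : (Zᴴ * Z).IsHermitian := by
    have := Matrix.isHermitian_mul_conjTranspose_self Zᴴ
    rwa [Matrix.conjTranspose_conjTranspose] at this
  have hT : (Z * Zᴴ).IsHermitian := Matrix.isHermitian_mul_conjTranspose_self Z
  obtain ⟨U, hU, hconj⟩ := exists_unitary_conj_of_charpoly_eq hS hT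
    (charpoly_mul_comm' Zᴴ Z)
  rw [hconj, hN.conj_unitary hU]

end Aux

theorem direct_sum_norm_bound {n : ℕ} (A B X : Matrix (Fin n) (Fin n) ℂ)
    (hM : (Matrix.fromBlocks A X Xᴴ B).PosSemidef)
    (N : Matrix ((Fin n ⊕ Fin n) ⊕ (Fin n ⊕ Fin n)) ((Fin n ⊕ Fin n) ⊕ (Fin n ⊕ Fin n)) ℂ → ℝ)
    (hN : IsSymmetricNorm N) :
    N (Matrix.fromBlocks (Matrix.fromBlocks A X Xᴴ B) 0 0 (Matrix.fromBlocks A X Xᴴ B)) ≤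
      2 * N (Matrix.fromBlocks (Matrix.fromBlocks A 0 0 B) 0 0 0) := by
  
  classical
  set M : Matrix (Fin n ⊕ Fin n) (Fin n ⊕ Fin n) ℂ := Matrix.fromBlocks A X Xᴴ B with hMdef
  set R : Matrix (Fin n ⊕ Fin n) (Fin n ⊕ Fin n) ℂ := (open scoped MatrixOrder in CFC.sqrt M) with hRdef
  have hRR : R * R = M := (open scoped MatrixOrder in CFC.sqrt_mul_sqrt_self M hM.nonneg)
  have hRH : Rᴴ = R := (open scoped MatrixOrder in (CFC.sqrt_nonneg M).posSemidef.1)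
  set E₁ : Matrix (Fin n ⊕ Fin n) (Fin n ⊕ Fin n) ℂ :=
    Matrix.fromBlocks (1 : Matrix (Fin n) (Fin n) ℂ) 0 0 0 with hE₁def
  set E₂ : Matrix (Fin n ⊕ Fin n) (Fin n ⊕ Fin n) ℂ :=
    Matrix.fromBlocks 0 0 0 (1 : Matrix (Fin n) (Fin n) ℂ) with hE₂def
  have hE₁H : E₁ᴴ = E₁ := by
    rw [hE₁def, Matrix.fromBlocks_conjTranspose]
    simp
  have hE₂H : E₂ᴴ = E₂ := by
    rw [hE₂def, Matrix.fromBlocks_conjTranspose]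
    simp
  have hE₁₁ : E₁ * E₁ = E₁ := by rw [hE₁def]; simp [Matrix.fromBlocks_multiply]
  have hE₂₂ : E₂ * E₂ = E₂ := by rw [hE₂def]; simp [Matrix.fromBlocks_multiply]
  have hE₁₂ : E₁ * E₂ = 0 := by
    rw [hE₁def, hE₂def]; simp [Matrix.fromBlocks_multiply]
  have hE₂₁ : E₂ * E₁ = 0 := by
    rw [hE₁def, hE₂def]; simp [Matrix.fromBlocks_multiply]
  have hEsum : E₁ + E₂ = 1 := by
    rw [hE₁def, hE₂def, ← Matrix.fromBlocks_one, Matrix.fromBlocks_add]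
    simp
  have hEME : E₁ * M * E₁ + E₂ * M * E₂ = Matrix.fromBlocks A 0 0 B := by
    rw [hE₁def, hE₂def, hMdef]
    simp [Matrix.fromBlocks_multiply, Matrix.fromBlocks_add]
  set J : Matrix ((Fin n ⊕ Fin n) ⊕ (Fin n ⊕ Fin n)) ((Fin n ⊕ Fin n) ⊕ (Fin n ⊕ Fin n)) ℂ :=
    Matrix.fromBlocks (R * E₁) 0 (R * E₂) 0 with hJdef
  set J' : Matrix ((Fin n ⊕ Fin n) ⊕ (Fin n ⊕ Fin n)) ((Fin n ⊕ Fin n) ⊕ (Fin n ⊕ Fin n)) ℂ :=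
    Matrix.fromBlocks (R * E₂) 0 (R * E₁) 0 with hJ'def
  have hprod : ∀ F G : Matrix (Fin n ⊕ Fin n) (Fin n ⊕ Fin n) ℂ,
      Fᴴ = F → Gᴴ = G → (R * F)ᴴ * (R * G) = F * M * G := by
    intro F G hF hG
    rw [Matrix.conjTranspose_mul, hF, hRH, ← hRR]
    simp only [Matrix.mul_assoc]
  have hprod' : ∀ F G : Matrix (Fin n ⊕ Fin n) (Fin n ⊕ Fin n) ℂ,
      Fᴴ = F → Gᴴ = G → (R * F) * (R * G)ᴴ = R * (F * G) * R := by
    intro F G hF hG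
    rw [Matrix.conjTranspose_mul, hG, hRH]
    simp only [Matrix.mul_assoc]
  have hJtJ : Jᴴ * J = Matrix.fromBlocks (Matrix.fromBlocks A 0 0 B) 0 0 0 := by
    rw [hJdef, Matrix.fromBlocks_conjTranspose, Matrix.fromBlocks_multiply]
    rw [hprod _ _ hE₁H hE₁H, hprod _ _ hE₂H hE₂H]
    simp only [Matrix.conjTranspose_zero, Matrix.mul_zero, Matrix.zero_mul, add_zero, zero_add]
    rw [hEME]
  have hJ'tJ' : J'ᴴ * J' = Matrix.fromBlocks (Matrix.fromBlocks A 0 0 B) 0 0 0 := by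
    rw [hJ'def, Matrix.fromBlocks_conjTranspose, Matrix.fromBlocks_multiply]
    rw [hprod _ _ hE₂H hE₂H, hprod _ _ hE₁H hE₁H]
    simp only [Matrix.conjTranspose_zero, Matrix.mul_zero, Matrix.zero_mul, add_zero, zero_add]
    rw [← hEME, add_comm]
  have hJJt : J * Jᴴ + J' * J'ᴴ = Matrix.fromBlocks M 0 0 M := by
    rw [hJdef, hJ'def, Matrix.fromBlocks_conjTranspose, Matrix.fromBlocks_conjTranspose,
      Matrix.fromBlocks_multiply, Matrix.fromBlocks_multiply, Matrix.fromBlocks_add]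
    rw [hprod' _ _ hE₁H hE₁H, hprod' _ _ hE₂H hE₂H, hprod' _ _ hE₁H hE₂H,
      hprod' _ _ hE₂H hE₁H]
    simp only [Matrix.conjTranspose_zero, Matrix.mul_zero, Matrix.zero_mul, add_zero, zero_add]
    rw [hE₁₁, hE₂₂, hE₁₂, hE₂₁]
    have hsum : R * E₁ * R + R * E₂ * R = M := by
      rw [← hRR]
      calc R * E₁ * R + R * E₂ * R = R * (E₁ * R) + R * (E₂ * R) := by
            rw [Matrix.mul_assoc, Matrix.mul_assoc]
        _ = R * (E₁ * R + E₂ * R) := by rw [Matrix.mul_add]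
        _ = R * ((E₁ + E₂) * R) := by rw [Matrix.add_mul]
        _ = R * (1 * R) := by rw [hEsum]
        _ = R * R := by rw [Matrix.one_mul]
    rw [hsum, add_comm (R * E₂ * R) (R * E₁ * R), hsum]
    simp
  calc N (Matrix.fromBlocks M 0 0 M) = N (J * Jᴴ + J' * J'ᴴ) := by rw [hJJt]
    _ ≤ N (J * Jᴴ) + N (J' * J'ᴴ) := hN.add_le _ _
    _ = N (Jᴴ * J) + N (J'ᴴ * J') := by
        rw [hN.mul_conjTranspose_self J, hN.mul_conjTranspose_self J']
    _ = 2 * N (Matrix.fromBlocks (Matrix.fromBlocks A 0 0 B) 0 0 0) := by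
        rw [hJtJ, hJ'tJ']
        ring
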